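/- arXiv:0901.2502 — 2 statements merged into one kernel-verified Lean document; each statement's English description precedes it below -/
import Mathlib

section
/- Let K be a simplicial complex, b ⊆ [n] nonempty with b not a face of K, and set Ũ_b(K) = {f ∈ K : (f ∪ b) \ {v} ∉ K for some v ∈ b} and L_b = ⋂_{b' ⊊ b} link(b', K). If Ũ_b(K) = ∅, then K = L_b ∗ ∂b, the join of L_b with the boundary complex of b. -/
/-- If `b` is a nonempty non-face of the simplicial complex `K` and
`Ũ_b(K) = {f ∈ K : (f ∪ b) \ {v} ∉ K for some v ∈ b}` is empty, then
`K = L_b ∗ ∂b`, where `L_b = ⋂_{b' ⊊ b} link(b',K)` and `∂b` is the boundary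
complex of `b` (all proper subsets of `b`). -/
theorem eq_join_of_Utilde_empty
    (K : Set (Finset ℕ))
    (hdc : ∀ f ∈ K, ∀ g ⊆ f, g ∈ K)
    (b : Finset ℕ) (hbne : b.Nonempty) (hbK : b ∉ K)
    (hU : {f | f ∈ K ∧ ∃ v ∈ b, (f ∪ b).erase v ∉ K} = ∅) :
    K = {s : Finset ℕ | ∃ l,
      (∀ b' ⊂ b, l ∈ K ∧ l ∩ b' = ∅ ∧ l ∪ b' ∈ K) ∧
      ∃ g ⊂ b, s = l ∪ g} := by
  have hU' : ∀ f ∈ K, ∀ v ∈ b, (f ∪ b).erase v ∈ K := by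
    intro f hf v hv
    by_contra h
    have : f ∈ ({f | f ∈ K ∧ ∃ v ∈ b, (f ∪ b).erase v ∉ K} : Set (Finset ℕ)) :=
      ⟨hf, v, hv, h⟩
    rw [hU] at this
    exact this
  ext f
  constructor
  · intro hf
    refine ⟨f \ b, ?_, f ∩ b, ?_, by simp [Finset.sdiff_union_inter]⟩
    · intro b' hb'
      refine ⟨hdc f hf _ Finset.sdiff_subset, ?_, ?_⟩
      · rw [Finset.eq_empty_iff_forall_notMem]
        intro x hx
        simp only [Finset.mem_inter, Finset.mem_sdiff] at hx
        exact hx.1.2 (hb'.subset hx.2)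
      · obtain ⟨v, hvb, hvb'⟩ := Finset.exists_of_ssubset hb'
        refine hdc _ (hU' f hf v hvb) _ ?_
        intro x hx
        rw [Finset.mem_erase, Finset.mem_union]
        rcases Finset.mem_union.mp hx with h | h
        · exact ⟨fun he => (Finset.mem_sdiff.mp h).2 (he ▸ hvb), Or.inl (Finset.mem_sdiff.mp h).1⟩
        · exact ⟨fun he => hvb' (he ▸ h), Or.inr (hb'.subset h)⟩
    · refine lt_of_le_of_ne Finset.inter_subset_right fun he => ?_
      exact hbK (hdc f hf b (he ▸ Finset.inter_subset_left))
  · rintro ⟨l, hl, g, hg, rfl⟩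
    exact (hl g hg).2.2
end

section
/- Let K be a simplicial complex on [n] and A_K its Stanley-Reisner ring over a field k. The annihilator of x_i in A_K satisfies: Ann(x_i) + I_K (as an ideal of the polynomial ring P = k[x_0,…,x_n], pulled back) equals the Stanley-Reisner ideal of the closed star st̄({i}, K); that is, P/(Ann(x_i) pulled back) ≅ A_{st̄({i},K)}. -/
open MvPolynomial

/-- The Stanley–Reisner ideal of a complex `M` on vertex set `α`. -/
noncomputable def srIdeal (k : Type*) [Field k] {α : Type*} (M : Set (Finset α)) :
    Ideal (MvPolynomial α k) :=
  Ideal.span {m | ∃ p : Finset α, p ∉ M ∧ m = ∏ i ∈ p, X i}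

lemma prod_X_eq_monomial (k : Type*) [Field k] {α : Type*} (p : Finset α) :
    (∏ j ∈ p, (X j : MvPolynomial α k)) = monomial (∑ j ∈ p, Finsupp.single j 1) 1 := by
  classical
  induction p using Finset.induction with
  | empty => simp
  | insert _ _ h ih =>
      rw [Finset.prod_insert h, Finset.sum_insert h, ih, X, monomial_mul, one_mul]

lemma srIdeal_eq (k : Type*) [Field k] {α : Type*} (M : Set (Finset α)) :
    srIdeal k M = Ideal.span ((fun s => monomial s (1 : k)) ''
      {d | ∃ p : Finset α, p ∉ M ∧ d = ∑ j ∈ p, Finsupp.single j 1}) := by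
  unfold srIdeal
  congr 1
  ext m
  constructor
  · rintro ⟨p, hp, rfl⟩
    exact ⟨_, ⟨p, hp, rfl⟩, (prod_X_eq_monomial k p).symm⟩
  · rintro ⟨d, ⟨p, hp, rfl⟩, rfl⟩
    exact ⟨p, hp, (prod_X_eq_monomial k p).symm⟩

lemma sum_single_le_iff {α : Type*} (q : Finset α) (e : α →₀ ℕ) :
    (∑ j ∈ q, Finsupp.single j 1) ≤ e ↔ ∀ j ∈ q, 1 ≤ e j := by
  classical
  rw [Finsupp.le_def]
  constructor
  · intro h j hj
    have := h j
    rwa [Finsupp.finset_sum_apply, Finset.sum_eq_single_of_mem j hj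
      (by intro b _ hb; simp [Finsupp.single_apply, hb]), Finsupp.single_apply, if_pos rfl] at this
  · intro h a
    rw [Finsupp.finset_sum_apply]
    by_cases ha : a ∈ q
    · rw [Finset.sum_eq_single_of_mem a ha
        (by intro b _ hb; simp [Finsupp.single_apply, hb]), Finsupp.single_apply, if_pos rfl]
      exact h a ha
    · rw [Finset.sum_eq_zero]
      · exact Nat.zero_le _
      · intro b hb
        have hba : b ≠ a := fun h' => ha (h' ▸ hb)
        simp [Finsupp.single_apply, hba]

theorem ann_xi_eq_SR_ideal_closedStar
    (k : Type*) [Field k] (n : ℕ)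
    (K : Set (Finset (Fin (n + 1))))
    (hdc : ∀ f ∈ K, ∀ g ⊆ f, g ∈ K)
    (i : Fin (n + 1)) (hi : ({i} : Finset (Fin (n + 1))) ∈ K) :
    ∀ p : MvPolynomial (Fin (n + 1)) k,
      p * X i ∈ srIdeal k K ↔ p ∈ srIdeal k {g | g ∈ K ∧ insert i g ∈ K} := by
  classical
  intro p
  rw [srIdeal_eq, srIdeal_eq, mem_ideal_span_monomial_image, mem_ideal_span_monomial_image,
    support_mul_X]
  simp only [Finset.mem_map, addRightEmbedding_apply]
  constructor
  · intro h d hd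
    obtain ⟨q, ⟨r, hr, rfl⟩, hle⟩ := h (d + Finsupp.single i 1) ⟨d, hd, rfl⟩
    rw [sum_single_le_iff] at hle
    -- r ⊆ d.support ∪ {i}
    by_cases hri : (r.erase i) ∈ K
    · -- then insert i (r.erase i) ∉ K, since r ⊆ insert i (r.erase i)
      have hins : insert i (r.erase i) ∉ K := by
        intro hmem
        exact hr (hdc _ hmem r (Finset.subset_insert_iff.2 (Finset.Subset.refl _)))
      refine ⟨∑ j ∈ r.erase i, Finsupp.single j 1, ⟨r.erase i, ?_, rfl⟩, ?_⟩
      · intro ⟨h1, h2⟩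
        exact hins h2
      · rw [sum_single_le_iff]
        intro j hj
        have hji : j ≠ i := (Finset.mem_erase.1 hj).1
        have := hle j (Finset.mem_erase.1 hj).2
        simpa [Finsupp.single_apply, Ne.symm hji] using this
    · refine ⟨∑ j ∈ r.erase i, Finsupp.single j 1, ⟨r.erase i, fun h' => hri h'.1, rfl⟩, ?_⟩
      rw [sum_single_le_iff]
      intro j hj
      have hji : j ≠ i := (Finset.mem_erase.1 hj).1
      have := hle j (Finset.mem_erase.1 hj).2
      simpa [Finsupp.single_apply, Ne.symm hji] using this
  · rintro h d ⟨e, he, rfl⟩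
    obtain ⟨q, ⟨r, hr, rfl⟩, hle⟩ := h e he
    rw [sum_single_le_iff] at hle
    by_cases hrK : r ∈ K
    · -- insert i r ∉ K
      have h2 : insert i r ∉ K := fun h' => hr ⟨hrK, h'⟩
      refine ⟨∑ j ∈ insert i r, Finsupp.single j 1, ⟨insert i r, h2, rfl⟩, ?_⟩
      rw [sum_single_le_iff]
      intro j hj
      rcases Finset.mem_insert.1 hj with rfl | hj'
      · simp [Finsupp.single_apply]
      · exact le_trans (hle j hj') (Finsupp.le_def.1 (self_le_add_right e _) j)
    · refine ⟨∑ j ∈ r, Finsupp.single j 1, ⟨r, hrK, rfl⟩, ?_⟩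
      rw [sum_single_le_iff]
      intro j hj
      exact le_trans (hle j hj) (Finsupp.le_def.1 (self_le_add_right e _) j)
end
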